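/- If U′ with finite second moment satisfies U′ =ᵈ (1−V)²·U′ + V²·U + V², with U′, V, U independent, V ~ Beta(1,θ), E[U] = 1, E[U²] = 11/9, then E[U′²] = (12θ+76)/(3(1+θ)(2+θ)(3+θ)) and Var(U′) = (28θ+4)/(3(1+θ)²(2+θ)(3+θ)). -/

import Mathlib

open MeasureTheory ProbabilityTheory
open scoped NNReal ENNReal

lemma beta_int (θ : ℝ) (hθ : 0 < θ) (j : ℕ) :
    ∫ x in Set.Icc (0:ℝ) 1, θ * (1 - x) ^ (θ - 1) * (1 - x) ^ j = θ / (θ + j) := by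
  have hpos : (0:ℝ) < θ + j := by positivity
  rw [integral_Icc_eq_integral_Ioc, ← intervalIntegral.integral_of_le zero_le_one]
  have h1 : ∫ x in (0:ℝ)..1, θ * (1 - x) ^ (θ - 1) * (1 - x) ^ j
      = ∫ u in (0:ℝ)..1, θ * u ^ (θ - 1) * u ^ j := by
    have := intervalIntegral.integral_comp_sub_left (a := (0:ℝ)) (b := 1)
      (fun u => θ * u ^ (θ - 1) * u ^ j) 1
    simpa using this
  rw [h1]
  have h2 : ∫ u in (0:ℝ)..1, θ * u ^ (θ - 1) * u ^ j
      = ∫ u in (0:ℝ)..1, θ * u ^ (θ - 1 + j) := by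
    apply intervalIntegral.integral_congr
    intro u hu
    simp only [Set.uIcc_of_le zero_le_one, Set.mem_Icc] at hu
    show θ * u ^ (θ - 1) * u ^ j = θ * u ^ (θ - 1 + (j:ℝ))
    rcases eq_or_lt_of_le hu.1 with h | h
    · rw [← h]
      rcases Nat.eq_zero_or_pos j with hj | hj
      · subst hj; simp
      · have hj1 : (1:ℝ) ≤ j := by exact_mod_cast hj
        rw [Real.zero_rpow (by intro hc; linarith : θ - 1 + (j:ℝ) ≠ 0)]
        have : (0:ℝ) ^ j = 0 := zero_pow (by omega)
        rw [this]; ring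
    · rw [mul_assoc, ← Real.rpow_natCast u j, ← Real.rpow_add h]
  rw [h2, intervalIntegral.integral_const_mul,
    integral_rpow (Or.inl (by linarith : (-1:ℝ) < θ - 1 + j))]
  rw [show θ - 1 + (j:ℝ) + 1 = θ + j by ring, Real.one_rpow,
    Real.zero_rpow (ne_of_gt hpos)]
  field_simp
  norm_num

lemma beta_exp (θ : ℝ) (hθ : 0 < θ) (f : ℝ → ℝ) :
    ∫ x, f x ∂(volume.withDensity fun v =>
        if v ∈ Set.Icc (0:ℝ) 1 then ENNReal.ofReal (θ * (1 - v) ^ (θ - 1)) else 0)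
      = ∫ x in Set.Icc (0:ℝ) 1, θ * (1 - x) ^ (θ - 1) * f x := by
  have hd : (fun v => if v ∈ Set.Icc (0:ℝ) 1 then ENNReal.ofReal (θ * (1 - v) ^ (θ - 1)) else 0)
      = (Set.Icc (0:ℝ) 1).indicator
          (fun v => ((Real.toNNReal (θ * (1 - v) ^ (θ - 1)) : ℝ≥0) : ℝ≥0∞)) := by
    funext v; simp [Set.indicator_apply, ENNReal.ofReal]
  rw [hd, withDensity_indicator measurableSet_Icc]
  have hm : Measurable fun v : ℝ => Real.toNNReal (θ * (1 - v) ^ (θ - 1)) := by fun_prop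
  rw [integral_withDensity_eq_integral_smul hm]
  apply setIntegral_congr_fun measurableSet_Icc
  intro x hx
  simp only [Set.mem_Icc] at hx
  have h0 : 0 ≤ θ * (1 - x) ^ (θ - 1) :=
    mul_nonneg hθ.le (Real.rpow_nonneg (by linarith) _)
  simp [NNReal.smul_def, Real.coe_toNNReal _ h0]

theorem hoppe_fixed_point_second_moment
    {Ω : Type*} [MeasureSpace Ω] [IsProbabilityMeasure (ℙ : Measure Ω)]
    (θ : ℝ) (hθ : 0 < θ)
    (U' U V : Ω → ℝ)
    (hU'm : Measurable U') (hUm : Measurable U) (hVm : Measurable V)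
    (hindep : iIndepFun ![U', V, U] ℙ)
    (hbeta : Measure.map V ℙ
      = volume.withDensity fun v =>
          if v ∈ Set.Icc (0 : ℝ) 1 then ENNReal.ofReal (θ * (1 - v) ^ (θ - 1)) else 0)
    (hEU : ∫ ω, U ω ∂ℙ = 1)
    (hEU2 : ∫ ω, (U ω) ^ 2 ∂ℙ = 11 / 9)
    (hfix : Measure.map (fun ω => (1 - V ω) ^ 2 * U' ω + (V ω) ^ 2 * U ω + (V ω) ^ 2) ℙ
      = Measure.map U' ℙ)
    (hintU' : Integrable U' ℙ) (hintU : Integrable U ℙ)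
    (hintU'2 : Integrable (fun ω => (U' ω) ^ 2) ℙ)
    (hintU2 : Integrable (fun ω => (U ω) ^ 2) ℙ) :
    (∫ ω, (U' ω) ^ 2 ∂ℙ = (12 * θ + 76) / (3 * (1 + θ) * (2 + θ) * (3 + θ))) ∧
      variance U' ℙ = (28 * θ + 4) / (3 * (1 + θ) ^ 2 * (2 + θ) * (3 + θ)) := by
  have h1p : (0:ℝ) < 1 + θ := by linarith
  have h2p : (0:ℝ) < 2 + θ := by linarith
  have h3p : (0:ℝ) < 3 + θ := by linarith
  have h4p : (0:ℝ) < 4 + θ := by linarith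
  -- V ∈ [0,1] a.s.
  have hVae : ∀ᵐ ω ∂(ℙ : Measure Ω), V ω ∈ Set.Icc (0:ℝ) 1 := by
    have hz : (Measure.map V ℙ) (Set.Icc (0:ℝ) 1)ᶜ = 0 := by
      rw [hbeta, withDensity_apply _ measurableSet_Icc.compl]
      rw [setLIntegral_congr_fun measurableSet_Icc.compl
        (fun x hx => if_neg hx)]
      simp
    have hz' : ℙ (V ⁻¹' (Set.Icc (0:ℝ) 1)ᶜ) = 0 := by
      rw [← Measure.map_apply hVm measurableSet_Icc.compl]; exact hz
    rw [ae_iff]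
    convert hz' using 2
    rfl
  -- moments of (1-V)
  have hmomV : ∀ j : ℕ, ∫ ω, (1 - V ω) ^ j ∂ℙ = θ / (θ + j) := by
    intro j
    have hmeas : Measurable fun x : ℝ => (1 - x) ^ j := by fun_prop
    calc ∫ ω, (1 - V ω) ^ j ∂ℙ
        = ∫ x, (1 - x) ^ j ∂(Measure.map V ℙ) :=
          (integral_map hVm.aemeasurable hmeas.aestronglyMeasurable).symm
      _ = θ / (θ + j) := by
          rw [hbeta, beta_exp θ hθ _, beta_int θ hθ j]
  -- integrability of bounded functions of V times integrable functions
  have hbnd : ∀ (φ : ℝ → ℝ), (∀ x ∈ Set.Icc (0:ℝ) 1, |φ x| ≤ 1) →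
      ∀ᵐ ω ∂(ℙ : Measure Ω), ‖φ (V ω)‖ ≤ 1 := by
    intro φ hφ
    filter_upwards [hVae] with ω hω
    simpa [Real.norm_eq_abs] using hφ _ hω
  have hmul : ∀ (φ : ℝ → ℝ), Measurable φ → (∀ x ∈ Set.Icc (0:ℝ) 1, |φ x| ≤ 1) →
      ∀ g : Ω → ℝ, Integrable g ℙ → Integrable (fun ω => φ (V ω) * g ω) ℙ := by
    intro φ hφm hφb g hg
    exact hg.bdd_mul ((hφm.comp hVm).aestronglyMeasurable) (hbnd φ hφb)
  have hWint : ∀ j : ℕ, Integrable (fun ω => (1 - V ω) ^ j) ℙ := by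
    intro j
    have := hmul (fun x => (1 - x) ^ j) (by fun_prop)
      (fun x hx => by
        rw [abs_pow]
        exact pow_le_one₀ (abs_nonneg _)
          (abs_le.2 ⟨by linarith [hx.2], by linarith [hx.1]⟩))
      (fun _ => 1) (integrable_const 1)
    simpa using this
  -- polynomial moments
  have hEpoly : ∀ a b c d e : ℝ,
      ∫ ω, (a + b * (1 - V ω) ^ 1 + c * (1 - V ω) ^ 2 + d * (1 - V ω) ^ 3
          + e * (1 - V ω) ^ 4) ∂ℙ
        = a + b * (θ / (θ + 1)) + c * (θ / (θ + 2)) + d * (θ / (θ + 3))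
          + e * (θ / (θ + 4)) := by
    intro a b c d e
    have i1 : Integrable (fun ω => a + b * (1 - V ω) ^ 1) ℙ :=
      (integrable_const a).add ((hWint 1).const_mul b)
    have i2 : Integrable (fun ω => a + b * (1 - V ω) ^ 1 + c * (1 - V ω) ^ 2) ℙ :=
      i1.add ((hWint 2).const_mul c)
    have i3 : Integrable (fun ω => a + b * (1 - V ω) ^ 1 + c * (1 - V ω) ^ 2
        + d * (1 - V ω) ^ 3) ℙ := i2.add ((hWint 3).const_mul d)
    rw [integral_add i3 ((hWint 4).const_mul e), integral_add i2 ((hWint 3).const_mul d),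
      integral_add i1 ((hWint 2).const_mul c),
      integral_add (integrable_const a) ((hWint 1).const_mul b),
      integral_const, integral_const_mul, integral_const_mul, integral_const_mul,
      integral_const_mul, hmomV 1, hmomV 2, hmomV 3, hmomV 4]
    norm_num
  -- independence
  have hfin : ∀ i, Measurable (![U', V, U] i) := by
    intro i; fin_cases i <;> simpa
  have hVU' : IndepFun V U' ℙ := by
    have := hindep.indepFun (show (1:Fin 3) ≠ 0 by decide); simpa using this
  have hVU : IndepFun V U ℙ := by
    have := hindep.indepFun (show (1:Fin 3) ≠ 2 by decide); simpa using this
  have hU'U : IndepFun U' U ℙ := by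
    have := hindep.indepFun (show (0:Fin 3) ≠ 2 by decide); simpa using this
  have hT : IndepFun (fun ω => (U' ω, U ω)) V ℙ := by
    have := hindep.indepFun_prodMk hfin 0 2 1 (by decide) (by decide)
    simpa using this
  have hIm : ∀ (φ : ℝ → ℝ), Measurable φ → ∀ (g : Ω → ℝ), Measurable g →
      IndepFun g V ℙ → ∫ ω, φ (V ω) * g ω ∂ℙ = (∫ ω, φ (V ω) ∂ℙ) * ∫ ω, g ω ∂ℙ := by
    intro φ hφ g hg hgi
    have h := ((hgi.symm).comp hφ measurable_id).integral_fun_mul_eq_mul_integral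
      ((hφ.comp hVm).aestronglyMeasurable) hg.aestronglyMeasurable
    simpa [Function.comp] using h
  -- bounds
  have hax : ∀ x ∈ Set.Icc (0:ℝ) 1, |x| ≤ 1 ∧ |1 - x| ≤ 1 := by
    intro x hx
    simp only [Set.mem_Icc] at hx
    exact ⟨abs_le.2 ⟨by linarith [hx.1], hx.2⟩,
      abs_le.2 ⟨by linarith [hx.2], by linarith [hx.1]⟩⟩
  have hbW : ∀ j : ℕ, ∀ x ∈ Set.Icc (0:ℝ) 1, |(1 - x) ^ j| ≤ 1 := fun j x hx => by
    rw [abs_pow]; exact pow_le_one₀ (abs_nonneg _) (hax x hx).2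
  have hbV : ∀ j : ℕ, ∀ x ∈ Set.Icc (0:ℝ) 1, |x ^ j| ≤ 1 := fun j x hx => by
    rw [abs_pow]; exact pow_le_one₀ (abs_nonneg _) (hax x hx).1
  have hbWV : ∀ x ∈ Set.Icc (0:ℝ) 1, |(1 - x) ^ 2 * x ^ 2| ≤ 1 := fun x hx => by
    rw [abs_mul]
    exact mul_le_one₀ (hbW 2 x hx) (abs_nonneg _) (hbV 2 x hx)
  -- moment values
  have hW2 : ∫ ω, (1 - V ω) ^ 2 ∂ℙ = θ / (θ + 2) := by simpa using hmomV 2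
  have hW4 : ∫ ω, (1 - V ω) ^ 4 ∂ℙ = θ / (θ + 4) := by simpa using hmomV 4
  have hEV2 : ∫ ω, (V ω) ^ 2 ∂ℙ
      = 1 + (-2) * (θ/(θ+1)) + 1 * (θ/(θ+2)) + 0 * (θ/(θ+3)) + 0 * (θ/(θ+4)) := by
    rw [show (fun ω : Ω => (V ω)^2) = fun ω => 1 + (-2)*(1-V ω)^1 + 1*(1-V ω)^2
        + 0*(1-V ω)^3 + 0*(1-V ω)^4 from funext fun ω => by ring]
    exact hEpoly 1 (-2) 1 0 0
  have hEV4 : ∫ ω, (V ω) ^ 4 ∂ℙ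
      = 1 + (-4) * (θ/(θ+1)) + 6 * (θ/(θ+2)) + (-4) * (θ/(θ+3)) + 1 * (θ/(θ+4)) := by
    rw [show (fun ω : Ω => (V ω)^4) = fun ω => 1 + (-4)*(1-V ω)^1 + 6*(1-V ω)^2
        + (-4)*(1-V ω)^3 + 1*(1-V ω)^4 from funext fun ω => by ring]
    exact hEpoly 1 (-4) 6 (-4) 1
  have hEWV : ∫ ω, ((1 - V ω) ^ 2 * (V ω) ^ 2) ∂ℙ
      = 0 + 0 * (θ/(θ+1)) + 1 * (θ/(θ+2)) + (-2) * (θ/(θ+3)) + 1 * (θ/(θ+4)) := by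
    rw [show (fun ω : Ω => (1 - V ω)^2 * (V ω)^2) = fun ω => 0 + 0*(1-V ω)^1 + 1*(1-V ω)^2
        + (-2)*(1-V ω)^3 + 1*(1-V ω)^4 from funext fun ω => by ring]
    exact hEpoly 0 0 1 (-2) 1
  -- first moment
  set m1 := ∫ ω, U' ω ∂ℙ with hm1def
  have hXm : Measurable fun ω => (1 - V ω)^2 * U' ω + V ω^2 * U ω + V ω^2 := by fun_prop
  have hEX : ∫ ω, ((1 - V ω)^2 * U' ω + V ω^2 * U ω + V ω^2) ∂ℙ = m1 := by
    calc ∫ ω, ((1 - V ω)^2 * U' ω + V ω^2 * U ω + V ω^2) ∂ℙ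
        = ∫ x, x ∂(Measure.map (fun ω => (1 - V ω)^2 * U' ω + V ω^2 * U ω + V ω^2) ℙ) :=
          (integral_map hXm.aemeasurable aestronglyMeasurable_id).symm
      _ = ∫ x, x ∂(Measure.map U' ℙ) := by rw [hfix]
      _ = m1 := integral_map hU'm.aemeasurable aestronglyMeasurable_id
  have iT1 : Integrable (fun ω => (1 - V ω)^2 * U' ω) ℙ :=
    hmul (fun x => (1-x)^2) (by fun_prop) (hbW 2) U' hintU'
  have iT2 : Integrable (fun ω => V ω^2 * U ω) ℙ :=
    hmul (fun x => x^2) (by fun_prop) (hbV 2) U hintU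
  have iT3 : Integrable (fun ω => V ω^2) ℙ := by
    simpa using hmul (fun x => x^2) (by fun_prop) (hbV 2) (fun _ => 1) (integrable_const 1)
  have iT12 : Integrable (fun ω => (1 - V ω)^2 * U' ω + V ω^2 * U ω) ℙ := iT1.add iT2
  have hsplit : m1 = (∫ ω, (1-V ω)^2 * U' ω ∂ℙ) + (∫ ω, V ω^2 * U ω ∂ℙ) + ∫ ω, V ω^2 ∂ℙ := by
    rw [← hEX, integral_add iT12 iT3, integral_add iT1 iT2]
  rw [hIm (fun x => (1-x)^2) (by fun_prop) U' hU'm hVU'.symm,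
    hIm (fun x => x^2) (by fun_prop) U hUm hVU.symm, hW2, hEU, hEV2] at hsplit
  have hne1 : θ + 1 ≠ 0 := by linarith
  have hne2 : θ + 2 ≠ 0 := by linarith
  have hne3 : θ + 3 ≠ 0 := by linarith
  have hne4 : θ + 4 ≠ 0 := by linarith
  have hm1 : m1 = 2/(1+θ) := by
    rw [← hm1def] at hsplit
    field_simp at hsplit ⊢
    have h3 : m1 * (2*(θ+1)^2*(θ+2)^2) = 4*(θ+1)*(θ+2)^2 := by
      have h5 : (m1*(θ+1) - 2) * (2*(θ+3)*(θ+4)) = 0 := by linear_combination hsplit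
      have h6 := (mul_eq_zero.1 h5).resolve_right (by positivity)
      linear_combination (2*(θ+1)*(θ+2)^2) * h6
    have h4 : m1*(1+θ) * (2*(θ+1)*(θ+2)^2) = 2 * (2*(θ+1)*(θ+2)^2) := by
      linear_combination (θ+2)^0 * h3
    exact mul_right_cancel₀ (by positivity) h4
  
  -- second moment
  set m2 := ∫ ω, (U' ω)^2 ∂ℙ with hm2def
  have hsq : Measurable fun x : ℝ => x^2 := by fun_prop
  have hEX2 : ∫ ω, ((1 - V ω)^2 * U' ω + V ω^2 * U ω + V ω^2)^2 ∂ℙ = m2 := by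
    calc ∫ ω, ((1 - V ω)^2 * U' ω + V ω^2 * U ω + V ω^2)^2 ∂ℙ
        = ∫ x, x^2 ∂(Measure.map (fun ω => (1 - V ω)^2 * U' ω + V ω^2 * U ω + V ω^2) ℙ) :=
          (integral_map hXm.aemeasurable hsq.aestronglyMeasurable).symm
      _ = ∫ x, x^2 ∂(Measure.map U' ℙ) := by rw [hfix]
      _ = m2 := integral_map hU'm.aemeasurable hsq.aestronglyMeasurable
  have ig2 : Integrable (fun ω => U' ω * (U ω + 1)) ℙ := by
    have h := hU'U.integrable_mul hintU' hintU
    have he : (fun ω => U' ω * (U ω + 1)) = fun ω => U' ω * U ω + U' ω :=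
      funext fun ω => by ring
    rw [he]
    exact h.add hintU'
  have ig3 : Integrable (fun ω => (U ω + 1)^2) ℙ := by
    have he : (fun ω => (U ω + 1)^2) = fun ω => U ω^2 + 2 * U ω + 1 :=
      funext fun ω => by ring
    rw [he]
    exact (hintU2.add (hintU.const_mul 2)).add (integrable_const 1)
  have iS1 : Integrable (fun ω => (1 - V ω)^4 * (U' ω)^2) ℙ :=
    hmul (fun x => (1-x)^4) (by fun_prop) (hbW 4) _ hintU'2
  have iS2 : Integrable (fun ω => (1 - V ω)^2 * (V ω)^2 * (U' ω * (U ω + 1))) ℙ :=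
    hmul (fun x => (1-x)^2 * x^2) (by fun_prop) hbWV _ ig2
  have iS2' : Integrable (fun ω => 2 * ((1 - V ω)^2 * (V ω)^2 * (U' ω * (U ω + 1)))) ℙ :=
    iS2.const_mul 2
  have iS3 : Integrable (fun ω => (V ω)^4 * ((U ω + 1)^2)) ℙ :=
    hmul (fun x => x^4) (by fun_prop) (hbV 4) _ ig3
  have iS12 : Integrable (fun ω => (1 - V ω)^4 * (U' ω)^2
      + 2 * ((1 - V ω)^2 * (V ω)^2 * (U' ω * (U ω + 1)))) ℙ := iS1.add iS2'
  have hsplit2 : m2 = (∫ ω, (1 - V ω)^4 * (U' ω)^2 ∂ℙ)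
      + 2 * (∫ ω, (1 - V ω)^2 * (V ω)^2 * (U' ω * (U ω + 1)) ∂ℙ)
      + ∫ ω, (V ω)^4 * ((U ω + 1)^2) ∂ℙ := by
    rw [← hEX2,
      show (fun ω => ((1 - V ω)^2 * U' ω + V ω^2 * U ω + V ω^2)^2)
        = fun ω => (1 - V ω)^4 * (U' ω)^2
          + 2 * ((1 - V ω)^2 * (V ω)^2 * (U' ω * (U ω + 1)))
          + (V ω)^4 * ((U ω + 1)^2) from funext fun ω => by ring,
      integral_add iS12 iS3, integral_add iS1 iS2', integral_const_mul]
  -- evaluate the three integrals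
  have hI1 : ∫ ω, (1 - V ω)^4 * (U' ω)^2 ∂ℙ = (θ/(θ+4)) * m2 := by
    have hind : IndepFun (fun ω => (U' ω)^2) V ℙ := by
      have := (hVU'.symm).comp hsq measurable_id
      simpa [Function.comp_def] using this
    rw [hIm (fun x => (1-x)^4) (by fun_prop) (fun ω => (U' ω)^2)
      (hU'm.pow_const 2) hind]
    rw [show (∫ ω, (1 - V ω)^4 ∂ℙ) = θ/(θ+4) from hW4]
  have hg2 : ∫ ω, U' ω * (U ω + 1) ∂ℙ = m1 * 2 := by
    have he : (fun ω => U' ω * (U ω + 1)) = fun ω => U' ω * U ω + U' ω :=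
      funext fun ω => by ring
    have imul : Integrable (fun ω => U' ω * U ω) ℙ := hU'U.integrable_mul hintU' hintU
    rw [he, integral_add imul hintU',
      hU'U.integral_fun_mul_eq_mul_integral hU'm.aestronglyMeasurable hUm.aestronglyMeasurable, hEU]
    ring
  have hg3 : ∫ ω, (U ω + 1)^2 ∂ℙ = 38/9 := by
    have he : (fun ω => (U ω + 1)^2) = fun ω => U ω^2 + 2 * U ω + 1 :=
      funext fun ω => by ring
    have i12 : Integrable (fun ω => U ω^2 + 2 * U ω) ℙ := hintU2.add (hintU.const_mul 2)
    rw [he, integral_add i12 (integrable_const 1), integral_add hintU2 (hintU.const_mul 2),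
      integral_const_mul, hEU, hEU2, integral_const]
    norm_num
  have hI2 : ∫ ω, (1 - V ω)^2 * (V ω)^2 * (U' ω * (U ω + 1)) ∂ℙ
      = (0 + 0 * (θ/(θ+1)) + 1 * (θ/(θ+2)) + (-2) * (θ/(θ+3)) + 1 * (θ/(θ+4))) * (m1 * 2) := by
    have hind : IndepFun (fun ω => U' ω * (U ω + 1)) V ℙ := by
      have := hT.comp (φ := fun p : ℝ × ℝ => p.1 * (p.2 + 1)) (ψ := id)
        (by fun_prop) measurable_id
      simpa [Function.comp_def] using this
    rw [hIm (fun x => (1-x)^2 * x^2) (by fun_prop) (fun ω => U' ω * (U ω + 1))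
      (hU'm.mul (hUm.add measurable_const)) hind, hEWV, hg2]
  have hI3 : ∫ ω, (V ω)^4 * ((U ω + 1)^2) ∂ℙ
      = (1 + (-4) * (θ/(θ+1)) + 6 * (θ/(θ+2)) + (-4) * (θ/(θ+3)) + 1 * (θ/(θ+4))) * (38/9) := by
    have hind : IndepFun (fun ω => (U ω + 1)^2) V ℙ := by
      have := (hVU.symm).comp (φ := fun x : ℝ => (x + 1)^2) (ψ := id) (by fun_prop) measurable_id
      simpa [Function.comp_def] using this
    rw [hIm (fun x => x^4) (by fun_prop) (fun ω => (U ω + 1)^2)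
      ((hUm.add measurable_const).pow_const 2) hind, hEV4, hg3]
  rw [hI1, hI2, hI3, hm1] at hsplit2
  have hm2 : m2 = (12 * θ + 76) / (3 * (1 + θ) * (2 + θ) * (3 + θ)) := by
    field_simp at hsplit2 ⊢
    have h3 : m2 * (36*(θ+1)^2*(θ+2)^2*(θ+3)^2*(θ+4)^2)
        = (144*θ+912)*(θ+1)*(θ+2)*(θ+3)*(θ+4)^2 := by
        linear_combination (θ+2)*(θ+3)*(θ+4)^2 * hsplit2
    have h4 : (m2 * (3*(1+θ)*(2+θ)*(3+θ))) * (12*(θ+1)*(θ+2)*(θ+3)*(θ+4)^2)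
        = (12*θ+76) * (12*(θ+1)*(θ+2)*(θ+3)*(θ+4)^2) := by linear_combination h3
    have h7 := mul_right_cancel₀ (by positivity) h4
    linear_combination h7
  refine ⟨hm2, ?_⟩
  have hL2 : MemLp U' 2 ℙ := (memLp_two_iff_integrable_sq hU'm.aestronglyMeasurable).2 hintU'2
  have hvar : variance U' ℙ = (∫ ω, (U' ω)^2 ∂ℙ) - (∫ ω, U' ω ∂ℙ)^2 := by
    rw [variance_eq_sub hL2]; rfl
  rw [hvar, ← hm2def, ← hm1def, hm2, hm1]
  field_simp
  ring
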